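/- Let J be uniform on {1,...,ℓ}, and let X, Y be finite-valued random variables such that, conditionally on J = j, X has law Q_j(X) and Y has law Q_j(Y) with A_j Q_j(Y) = Q_j(X) for stochastic matrices A_j. If I(X:J) - I(Y:J) > log₂ d for some positive integer d, then the matrices A_1, ..., A_ℓ take more than d distinct values. -/

import Mathlib

open Finset

/-- Shannon entropy (base 2). -/
noncomputable def entC {n : ℕ} (v : Fin n → ℝ) : ℝ :=
  -∑ i, v i * Real.logb 2 (v i)

/-! ### Auxiliary definitions and lemmas -/

/-- Shannon entropy (natural log). -/
noncomputable def entR {n : ℕ} (v : Fin n → ℝ) : ℝ := -∑ i, v i * Real.log (v i)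

/-- Kullback–Leibler divergence (natural log, finite sums, with conventions). -/
noncomputable def KL {n : ℕ} (μ ν : Fin n → ℝ) : ℝ := ∑ y, μ y * Real.log (μ y / ν y)

lemma entC_eq {n : ℕ} (v : Fin n → ℝ) : entC v = entR v / Real.log 2 := by
  simp only [entC, entR, Real.logb, neg_div, Finset.sum_div]
  congr 1
  refine Finset.sum_congr rfl fun i _ => ?_
  ring

lemma sub_le_mul_log {a b : ℝ} (ha : 0 ≤ a) (hb : 0 ≤ b) (h : b = 0 → a = 0) :
    a - b ≤ a * Real.log (a / b) := by
  rcases ha.eq_or_lt with h0 | h0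
  · simp [← h0]; linarith
  · have hb' : 0 < b := by
      rcases hb.eq_or_lt with h1 | h1
      · exact absurd (h h1.symm) h0.ne'
      · exact h1
    have h1 : Real.log (b / a) ≤ b / a - 1 := Real.log_le_sub_one_of_pos (by positivity)
    have h2 : Real.log (a / b) = -Real.log (b / a) := by
      rw [← Real.log_inv]; congr 1; field_simp
    rw [h2]
    have h4 : a * Real.log (b / a) ≤ a * (b / a - 1) := mul_le_mul_of_nonneg_left h1 h0.le
    have h5 : a * (b / a - 1) = b - a := by field_simp
    linarith

/-- The log-sum inequality. -/
lemma logSum {ι : Type*} (s : Finset ι) (a b : ι → ℝ)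
    (ha : ∀ i ∈ s, 0 ≤ a i) (hb : ∀ i ∈ s, 0 ≤ b i)
    (hab : ∀ i ∈ s, b i = 0 → a i = 0) :
    (∑ i ∈ s, a i) * Real.log ((∑ i ∈ s, a i) / (∑ i ∈ s, b i))
      ≤ ∑ i ∈ s, a i * Real.log (a i / b i) := by
  rcases (Finset.sum_nonneg ha).eq_or_lt with hS0 | hS0
  · have h0 : ∀ i ∈ s, a i = 0 := fun i hi =>
      (Finset.sum_eq_zero_iff_of_nonneg ha).1 hS0.symm i hi
    rw [← hS0, zero_mul]
    refine Finset.sum_nonneg fun i hi => ?_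
    rw [h0 i hi]; simp
  · have hT0 : 0 < ∑ i ∈ s, b i := by
      rcases (Finset.sum_nonneg hb).eq_or_lt with h1 | h1
      · exfalso
        have hb0 := (Finset.sum_eq_zero_iff_of_nonneg hb).1 h1.symm
        have : (∑ i ∈ s, a i) = 0 := Finset.sum_eq_zero fun i hi => hab i hi (hb0 i hi)
        exact hS0.ne' this
      · exact h1
    set t := (∑ i ∈ s, a i) / (∑ i ∈ s, b i) with ht
    have ht0 : 0 < t := div_pos hS0 hT0
    have key : ∀ i ∈ s, a i - b i * t ≤ a i * Real.log (a i / b i) - a i * Real.log t := by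
      intro i hi
      rcases (ha i hi).eq_or_lt with h0 | h0
      · rw [← h0]; simp
        nlinarith [mul_nonneg (hb i hi) ht0.le]
      · have hbi : 0 < b i := by
          rcases (hb i hi).eq_or_lt with h1 | h1
          · exact absurd (hab i hi h1.symm) h0.ne'
          · exact h1
        have h2 : a i - b i * t ≤ a i * Real.log (a i / (b i * t)) :=
          sub_le_mul_log (ha i hi) (by positivity) (by intro h; nlinarith)
        have h3 : Real.log (a i / (b i * t)) = Real.log (a i / b i) - Real.log t := by
          rw [show a i / (b i * t) = (a i / b i) / t by ring,
            Real.log_div (by positivity) ht0.ne']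
        rw [h3] at h2; nlinarith
    have hsum := Finset.sum_le_sum key
    simp only [Finset.sum_sub_distrib, ← Finset.sum_mul] at hsum
    have hz : (∑ i ∈ s, a i) - (∑ i ∈ s, b i) * t = 0 := by
      rw [ht]; field_simp; ring
    linarith

lemma KL_nonneg {n : ℕ} (μ ν : Fin n → ℝ) (hμ0 : ∀ x, 0 ≤ μ x) (hν0 : ∀ x, 0 ≤ ν x)
    (hac : ∀ x, ν x = 0 → μ x = 0) (hμ1 : ∑ x, μ x = 1) (hν1 : ∑ x, ν x ≤ 1) :
    0 ≤ KL μ ν := by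
  have h := logSum Finset.univ μ ν (fun x _ => hμ0 x) (fun x _ => hν0 x) (fun x _ => hac x)
  rw [hμ1, one_mul] at h
  have hνpos : 0 < ∑ x, ν x := by
    rcases (Finset.sum_nonneg fun x (_ : x ∈ Finset.univ) => hν0 x).eq_or_lt with h1 | h1
    · exfalso
      have hz := (Finset.sum_eq_zero_iff_of_nonneg fun x _ => hν0 x).1 h1.symm
      have : (∑ x, μ x) = 0 :=
        Finset.sum_eq_zero fun x hx => hac x (hz x hx)
      rw [hμ1] at this; norm_num at this
    · exact h1
  have h2 : 0 ≤ Real.log (1 / ∑ x, ν x) :=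
    Real.log_nonneg (by rw [le_div_iff₀ hνpos]; linarith)
  exact le_trans h2 h

/-- Identity: average KL to the mixture equals the mutual-information gap. -/
lemma avg_KL {ℓ n : ℕ} (hl : 0 < ℓ) (Q : Fin ℓ → Fin n → ℝ) (hQ0 : ∀ j y, 0 ≤ Q j y) :
    (1 / (ℓ:ℝ)) * ∑ j, KL (Q j) (fun y => (1 / (ℓ:ℝ)) * ∑ i, Q i y)
      = entR (fun y => (1 / (ℓ:ℝ)) * ∑ i, Q i y) - (1 / (ℓ:ℝ)) * ∑ j, entR (Q j) := by
  have hL : (0:ℝ) < ℓ := Nat.cast_pos.2 hl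
  have key : ∀ j y, Q j y * Real.log (Q j y / ((1 / (ℓ:ℝ)) * ∑ i, Q i y))
      = Q j y * Real.log (Q j y) - Q j y * Real.log ((1 / (ℓ:ℝ)) * ∑ i, Q i y) := by
    intro j y
    rcases (hQ0 j y).eq_or_lt with h0 | h0
    · simp [← h0]
    · have hM : 0 < (1 / (ℓ:ℝ)) * ∑ i, Q i y := by
        have h1 : Q j y ≤ ∑ i, Q i y :=
          Finset.single_le_sum (fun i _ => hQ0 i y) (Finset.mem_univ j)
        have h2 : 0 < ∑ i, Q i y := lt_of_lt_of_le h0 h1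
        positivity
      rw [Real.log_div h0.ne' hM.ne', mul_sub]
  simp only [KL, key, Finset.sum_sub_distrib, mul_sub, entR]
  have h2 : (1/(ℓ:ℝ)) * ∑ j : Fin ℓ, ∑ x, Q j x * Real.log (1/(ℓ:ℝ) * ∑ i, Q i x)
      = ∑ x, ((1/(ℓ:ℝ) * ∑ i, Q i x) * Real.log (1/(ℓ:ℝ) * ∑ i, Q i x)) := by
    rw [Finset.mul_sum]
    simp only [Finset.mul_sum]
    rw [Finset.sum_comm]
    refine Finset.sum_congr rfl fun x _ => ?_
    simp only [← mul_assoc]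
    rw [← Finset.sum_mul, ← Finset.mul_sum]
  rw [h2]
  simp only [Finset.sum_neg_distrib, mul_neg]
  ring

/-- Data processing inequality for KL divergence under a column-stochastic matrix. -/
lemma KL_mulVec_le {nX nY : ℕ} (B : Matrix (Fin nX) (Fin nY) ℝ)
    (hB0 : ∀ x y, 0 ≤ B x y) (hB1 : ∀ y, ∑ x, B x y = 1)
    (μ ν : Fin nY → ℝ) (hμ0 : ∀ y, 0 ≤ μ y) (hν0 : ∀ y, 0 ≤ ν y)
    (hac : ∀ y, ν y = 0 → μ y = 0) :
    KL (B.mulVec μ) (B.mulVec ν) ≤ KL μ ν := by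
  have step1 : ∀ x, (B.mulVec μ x) * Real.log (B.mulVec μ x / B.mulVec ν x)
      ≤ ∑ y, (B x y * μ y) * Real.log ((B x y * μ y) / (B x y * ν y)) := by
    intro x
    have := logSum Finset.univ (fun y => B x y * μ y) (fun y => B x y * ν y)
      (fun y _ => mul_nonneg (hB0 x y) (hμ0 y)) (fun y _ => mul_nonneg (hB0 x y) (hν0 y))
      (fun y _ h => by
        have h' : B x y * ν y = 0 := h
        show B x y * μ y = 0
        rcases mul_eq_zero.1 h' with h2 | h2
        · rw [h2, zero_mul]
        · rw [hac y h2, mul_zero])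
    simpa [Matrix.mulVec, dotProduct] using this
  have step2 : ∀ x y, (B x y * μ y) * Real.log ((B x y * μ y) / (B x y * ν y))
      = B x y * (μ y * Real.log (μ y / ν y)) := by
    intro x y
    rcases (hB0 x y).eq_or_lt with h0 | h0
    · rw [← h0]; simp
    · rw [mul_div_mul_left _ _ h0.ne']; ring
  calc KL (B.mulVec μ) (B.mulVec ν)
      ≤ ∑ x, ∑ y, (B x y * μ y) * Real.log ((B x y * μ y) / (B x y * ν y)) :=
        Finset.sum_le_sum fun x _ => step1 x
    _ = ∑ y, (∑ x, B x y) * (μ y * Real.log (μ y / ν y)) := by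
        simp only [step2]
        rw [Finset.sum_comm]
        simp [Finset.sum_mul]
    _ = KL μ ν := by simp [hB1, KL]

/-- KL is antitone in the second argument (pointwise). -/
lemma KL_anti {n : ℕ} (μ ν ν' : Fin n → ℝ) (hμ0 : ∀ x, 0 ≤ μ x)
    (hν : ∀ x, μ x ≠ 0 → 0 < ν x) (hle : ∀ x, ν x ≤ ν' x) :
    KL μ ν' ≤ KL μ ν := by
  refine Finset.sum_le_sum fun x _ => ?_
  rcases (hμ0 x).eq_or_lt with h0 | h0
  · rw [← h0]; simp
  · have hνx := hν x h0.ne'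
    have hν'x : 0 < ν' x := lt_of_lt_of_le hνx (hle x)
    refine mul_le_mul_of_nonneg_left ?_ h0.le
    exact Real.log_le_log (by positivity) (div_le_div_of_nonneg_left h0.le hνx (hle x))

lemma KL_smul {n : ℕ} (μ σ : Fin n → ℝ) (c : ℝ) (hc : 0 < c) (hμ1 : ∑ x, μ x = 1)
    (hσ : ∀ x, μ x ≠ 0 → 0 < σ x) :
    KL μ (fun x => c * σ x) = KL μ σ - Real.log c := by
  have key : ∀ x, μ x * Real.log (μ x / (c * σ x))
      = μ x * Real.log (μ x / σ x) - μ x * Real.log c := by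
    intro x
    rcases eq_or_ne (μ x) 0 with h0 | h0
    · simp [h0]
    · have hσx := hσ x h0
      rw [show μ x / (c * σ x) = (μ x / σ x) / c by rw [div_div, mul_comm],
        Real.log_div (by positivity) hc.ne', mul_sub]
  simp only [KL, key, Finset.sum_sub_distrib, ← Finset.sum_mul, hμ1, one_mul]

/-- The fiber of matrices equal to `B`. -/
noncomputable def fib {ℓ nX nY : ℕ} (A : Fin ℓ → Matrix (Fin nX) (Fin nY) ℝ)
    (B : Matrix (Fin nX) (Fin nY) ℝ) : Finset (Fin ℓ) :=
  Finset.univ.filter (fun i => A i = B)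

/-- The average of the `QY` over a fiber. -/
noncomputable def ybr {ℓ nX nY : ℕ} (A : Fin ℓ → Matrix (Fin nX) (Fin nY) ℝ)
    (QY : Fin ℓ → Fin nY → ℝ) (B : Matrix (Fin nX) (Fin nY) ℝ) (y : Fin nY) : ℝ :=
  (1 / ((fib A B).card : ℝ)) * ∑ i ∈ fib A B, QY i y

theorem aux (ℓ nX nY : ℕ) (hℓ : 0 < ℓ)
    (QY : Fin ℓ → Fin nY → ℝ) (hQY0 : ∀ j y, 0 ≤ QY j y) (hQY1 : ∀ j, ∑ y, QY j y = 1)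
    (QX : Fin ℓ → Fin nX → ℝ) (A : Fin ℓ → Matrix (Fin nX) (Fin nY) ℝ)
    (hA0 : ∀ j x y, 0 ≤ A j x y) (hA1 : ∀ j y, ∑ x, A j x y = 1)
    (hAQ : ∀ j, (A j).mulVec (QY j) = QX j) :
    (entR (fun x => (1/(ℓ:ℝ)) * ∑ j, QX j x) - (1/(ℓ:ℝ)) * ∑ j, entR (QX j))
      - (entR (fun y => (1/(ℓ:ℝ)) * ∑ j, QY j y) - (1/(ℓ:ℝ)) * ∑ j, entR (QY j))
      ≤ Real.log ((Finset.univ.image A).card) := by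
  have hL : (0:ℝ) < ℓ := Nat.cast_pos.2 hℓ
  have hQXeq : ∀ j x, QX j x = ∑ y, A j x y * QY j y := by
    intro j x
    rw [← hAQ j]
    simp [Matrix.mulVec, dotProduct]
  have hQX0 : ∀ j x, 0 ≤ QX j x := fun j x => by
    rw [hQXeq]
    exact Finset.sum_nonneg fun y _ => mul_nonneg (hA0 j x y) (hQY0 j y)
  have hQX1 : ∀ j, ∑ x, QX j x = 1 := by
    intro j
    simp only [hQXeq]
    rw [Finset.sum_comm]
    rw [Finset.sum_congr rfl fun y _ => by rw [← Finset.sum_mul, hA1 j y, one_mul]]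
    exact hQY1 j
  have hmemT : ∀ j, A j ∈ Finset.univ.image A :=
    fun j => Finset.mem_image_of_mem A (Finset.mem_univ j)
  have hjfib : ∀ j, j ∈ fib A (A j) := fun j => by simp [fib]
  have hcj : ∀ j, (0:ℝ) < ((fib A (A j)).card : ℝ) :=
    fun j => Nat.cast_pos.2 (Finset.card_pos.2 ⟨j, hjfib j⟩)
  have hyb0 : ∀ B y, 0 ≤ ybr A QY B y := by
    intro B y
    exact mul_nonneg (by positivity) (Finset.sum_nonneg fun i _ => hQY0 i y)
  have hybac : ∀ j y, ybr A QY (A j) y = 0 → QY j y = 0 := by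
    intro j y h
    have h1 : (∑ i ∈ fib A (A j), QY i y) = 0 := by
      unfold ybr at h
      rcases mul_eq_zero.1 h with h2 | h2
      · exfalso
        have h3 := hcj j
        rw [div_eq_zero_iff] at h2
        rcases h2 with h2 | h2
        · norm_num at h2
        · rw [h2] at h3; norm_num at h3
      · exact h2
    exact (Finset.sum_eq_zero_iff_of_nonneg fun i _ => hQY0 i y).1 h1 j (hjfib j)
  have hybge : ∀ j y, QY j y ≤ ((fib A (A j)).card : ℝ) * ybr A QY (A j) y := by
    intro j y
    unfold ybr
    rw [← mul_assoc, mul_one_div, div_self (hcj j).ne', one_mul]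
    exact Finset.single_le_sum (fun i _ => hQY0 i y) (hjfib j)
  have hybpos : ∀ j y, QY j y ≠ 0 → 0 < ybr A QY (A j) y := by
    intro j y hy
    have h0 : 0 < QY j y := lt_of_le_of_ne (hQY0 j y) (Ne.symm hy)
    rcases (hyb0 (A j) y).eq_or_lt with hb0 | hb0
    · exfalso
      have := hybge j y
      rw [← hb0, mul_zero] at this
      linarith
    · exact hb0
  -- Step A and E: identities
  have hIA := avg_KL hℓ QX hQX0
  have hIE := avg_KL hℓ QY hQY0
  -- Step B
  have hB : ∀ j, KL (QX j) (fun x => (1/(ℓ:ℝ)) * ∑ i, QX i x)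
      ≤ KL (QY j) (ybr A QY (A j))
        + (Real.log (ℓ:ℝ) - Real.log ((fib A (A j)).card : ℝ)) := by
    intro j
    set c := ((fib A (A j)).card : ℝ) with hc
    have hc0 : 0 < c := hcj j
    set σ := (A j).mulVec (ybr A QY (A j)) with hσ
    have hσeq : ∀ x, σ x = ∑ y, A j x y * ybr A QY (A j) y := by
      intro x; rw [hσ]; simp [Matrix.mulVec, dotProduct]
    have hσpos : ∀ x, QX j x ≠ 0 → 0 < σ x := by
      intro x hx
      have h1 : QX j x / c ≤ σ x := by
        rw [hσeq, hQXeq, Finset.sum_div]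
        refine Finset.sum_le_sum fun y _ => ?_
        rw [mul_div_assoc]
        exact mul_le_mul_of_nonneg_left
          (by rw [div_le_iff₀ hc0, mul_comm]; exact hybge j y) (hA0 j x y)
      have h2 : 0 < QX j x := lt_of_le_of_ne (hQX0 j x) (Ne.symm hx)
      exact lt_of_lt_of_le (by positivity) h1
    have hle : ∀ x, (c / (ℓ:ℝ)) * σ x ≤ (1/(ℓ:ℝ)) * ∑ i, QX i x := by
      intro x
      have h1 : ∑ i ∈ fib A (A j), QX i x = c * σ x := by
        rw [hσeq]
        rw [Finset.sum_congr rfl fun i hi => by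
          rw [hQXeq, (Finset.mem_filter.1 hi).2]]
        rw [Finset.sum_comm, Finset.mul_sum]
        refine Finset.sum_congr rfl fun y _ => ?_
        unfold ybr
        rw [← Finset.mul_sum, ← hc, ← mul_assoc, ← mul_assoc, mul_comm c (A j x y),
          mul_assoc (A j x y), mul_one_div, div_self hc0.ne', mul_one]
      have h2 : ∑ i ∈ fib A (A j), QX i x ≤ ∑ i, QX i x :=
        Finset.sum_le_sum_of_subset_of_nonneg (Finset.subset_univ _)
          (fun i _ _ => hQX0 i x)
      calc (c / (ℓ:ℝ)) * σ x = (1/(ℓ:ℝ)) * (c * σ x) := by ring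
        _ = (1/(ℓ:ℝ)) * ∑ i ∈ fib A (A j), QX i x := by rw [h1]
        _ ≤ (1/(ℓ:ℝ)) * ∑ i, QX i x :=
            mul_le_mul_of_nonneg_left h2 (by positivity)
    have s1 : KL (QX j) (fun x => (1/(ℓ:ℝ)) * ∑ i, QX i x)
        ≤ KL (QX j) (fun x => (c/(ℓ:ℝ)) * σ x) :=
      KL_anti (QX j) _ _ (hQX0 j)
        (fun x hx => mul_pos (div_pos hc0 hL) (hσpos x hx)) hle
    have s2 : KL (QX j) (fun x => (c/(ℓ:ℝ)) * σ x) = KL (QX j) σ - Real.log (c/(ℓ:ℝ)) :=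
      KL_smul (QX j) σ _ (div_pos hc0 hL) (hQX1 j) hσpos
    have s3 : KL (QX j) σ ≤ KL (QY j) (ybr A QY (A j)) := by
      have h := KL_mulVec_le (A j) (hA0 j) (hA1 j) (QY j) (ybr A QY (A j)) (hQY0 j)
        (hyb0 (A j)) (hybac j)
      rw [hAQ j] at h
      exact h
    have s4 : Real.log (c/(ℓ:ℝ)) = Real.log c - Real.log (ℓ:ℝ) :=
      Real.log_div hc0.ne' hL.ne'
    linarith
  -- facts about the global Y mixture
  have hMY0 : ∀ y, 0 ≤ (1/(ℓ:ℝ)) * ∑ i, QY i y := by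
    intro y
    exact mul_nonneg (by positivity) (Finset.sum_nonneg fun i _ => hQY0 i y)
  have hMY1 : ∑ y, (1/(ℓ:ℝ)) * ∑ i, QY i y = 1 := by
    rw [← Finset.mul_sum, Finset.sum_comm]
    rw [Finset.sum_congr rfl fun i _ => hQY1 i]
    simp
    field_simp
  have hMYac : ∀ B y, (1/(ℓ:ℝ)) * ∑ i, QY i y = 0 → ybr A QY B y = 0 := by
    intro B y h
    rcases mul_eq_zero.1 h with h2 | h2
    · exfalso; rw [div_eq_zero_iff] at h2; rcases h2 with h2 | h2
      · norm_num at h2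
      · rw [h2] at hL; norm_num at hL
    · have hz := (Finset.sum_eq_zero_iff_of_nonneg fun i _ => hQY0 i y).1 h2
      unfold ybr
      rw [Finset.sum_eq_zero fun i hi => hz i (Finset.mem_univ i), mul_zero]
  have hybsum1 : ∀ B ∈ Finset.univ.image A, ∑ y, ybr A QY B y = 1 := by
    intro B hB'
    obtain ⟨j, _, rfl⟩ := Finset.mem_image.1 hB'
    unfold ybr
    rw [← Finset.mul_sum, Finset.sum_comm]
    rw [Finset.sum_congr rfl fun i _ => hQY1 i]
    rw [Finset.sum_const, nsmul_eq_mul, mul_one, one_div,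
      inv_mul_cancel₀ (hcj j).ne']
  -- Step C
  have hC : ∑ j, KL (QY j) (ybr A QY (A j))
      ≤ ∑ j, KL (QY j) (fun y => (1/(ℓ:ℝ)) * ∑ i, QY i y) := by
    rw [← sub_nonneg, ← Finset.sum_sub_distrib]
    have key : ∀ j, KL (QY j) (fun y => (1/(ℓ:ℝ)) * ∑ i, QY i y)
          - KL (QY j) (ybr A QY (A j))
        = ∑ y, QY j y * Real.log (ybr A QY (A j) y / ((1/(ℓ:ℝ)) * ∑ i, QY i y)) := by
      intro j
      unfold KL
      rw [← Finset.sum_sub_distrib]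
      refine Finset.sum_congr rfl fun y _ => ?_
      rcases (hQY0 j y).eq_or_lt with h0 | h0
      · rw [← h0]; simp
      · have h1 : QY j y ≤ ∑ i, QY i y :=
          Finset.single_le_sum (fun i _ => hQY0 i y) (Finset.mem_univ j)
        have h2 : 0 < ∑ i, QY i y := lt_of_lt_of_le h0 h1
        have hMy : 0 < (1/(ℓ:ℝ)) * ∑ i, QY i y := by positivity
        have hby : 0 < ybr A QY (A j) y := hybpos j y h0.ne'
        rw [← mul_sub, Real.log_div h0.ne' hMy.ne', Real.log_div h0.ne' hby.ne',
          Real.log_div hby.ne' hMy.ne']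
        ring
    rw [Finset.sum_congr rfl fun j _ => key j]
    rw [← Finset.sum_fiberwise_of_maps_to (fun j (_ : j ∈ Finset.univ) => hmemT j)]
    refine Finset.sum_nonneg fun B hB' => ?_
    have hcB : (0:ℝ) < ((fib A B).card : ℝ) := by
      obtain ⟨j, _, rfl⟩ := Finset.mem_image.1 hB'
      exact hcj j
    have hrepl : ∀ j ∈ Finset.univ.filter (fun i => A i = B),
        (∑ y, QY j y * Real.log (ybr A QY (A j) y / ((1/(ℓ:ℝ)) * ∑ i, QY i y)))
        = ∑ y, QY j y * Real.log (ybr A QY B y / ((1/(ℓ:ℝ)) * ∑ i, QY i y)) := by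
      intro j hj
      rw [(Finset.mem_filter.1 hj).2]
    rw [Finset.sum_congr rfl hrepl, Finset.sum_comm]
    have h2 : ∀ y, (∑ j ∈ Finset.univ.filter (fun i => A i = B),
          QY j y * Real.log (ybr A QY B y / ((1/(ℓ:ℝ)) * ∑ i, QY i y)))
        = ((fib A B).card : ℝ)
          * (ybr A QY B y * Real.log (ybr A QY B y / ((1/(ℓ:ℝ)) * ∑ i, QY i y))) := by
      intro y
      rw [← Finset.sum_mul, ← mul_assoc]
      have h3 : ((fib A B).card:ℝ) * ybr A QY B y = ∑ i ∈ fib A B, QY i y := by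
        unfold ybr
        rw [← mul_assoc, mul_one_div, div_self hcB.ne', one_mul]
      rw [h3]
      rfl
    rw [Finset.sum_congr rfl fun y _ => h2 y, ← Finset.mul_sum]
    refine mul_nonneg hcB.le ?_
    exact KL_nonneg (ybr A QY B) (fun y => (1/(ℓ:ℝ)) * ∑ i, QY i y) (hyb0 B) hMY0
      (hMYac B) (hybsum1 B hB') (le_of_eq hMY1)
  -- Step D
  have hTne : 0 < (Finset.univ.image A).card :=
    Finset.card_pos.2 ⟨A ⟨0, hℓ⟩, hmemT ⟨0, hℓ⟩⟩
  have hTcast : (0:ℝ) < ((Finset.univ.image A).card : ℝ) := Nat.cast_pos.2 hTne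
  have hcB' : ∀ B ∈ Finset.univ.image A, (0:ℝ) < ((fib A B).card : ℝ) := by
    intro B hB'
    obtain ⟨j, _, rfl⟩ := Finset.mem_image.1 hB'
    exact hcj j
  have hsumc : ∑ B ∈ Finset.univ.image A, ((fib A B).card : ℝ) = (ℓ:ℝ) := by
    have h := Finset.sum_fiberwise_of_maps_to
      (fun j (_ : j ∈ Finset.univ) => hmemT j) (fun _ : Fin ℓ => (1:ℝ))
    simp only [Finset.sum_const, nsmul_eq_mul, mul_one, Finset.card_univ,
      Fintype.card_fin] at h
    exact h
  have hD : (1/(ℓ:ℝ)) * ∑ j, (Real.log (ℓ:ℝ) - Real.log ((fib A (A j)).card : ℝ))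
      ≤ Real.log ((Finset.univ.image A).card) := by
    have hgroup : ∑ j, (Real.log (ℓ:ℝ) - Real.log ((fib A (A j)).card:ℝ))
        = ∑ B ∈ Finset.univ.image A,
            ((fib A B).card:ℝ) * (Real.log (ℓ:ℝ) - Real.log ((fib A B).card:ℝ)) := by
      rw [← Finset.sum_fiberwise_of_maps_to (fun j (_ : j ∈ Finset.univ) => hmemT j)]
      refine Finset.sum_congr rfl fun B hB' => ?_
      rw [Finset.sum_congr rfl (fun j hj => by rw [(Finset.mem_filter.1 hj).2] :
        ∀ j ∈ Finset.univ.filter (fun i => A i = B),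
          (Real.log (ℓ:ℝ) - Real.log ((fib A (A j)).card:ℝ))
          = (Real.log (ℓ:ℝ) - Real.log ((fib A B).card:ℝ)))]
      rw [Finset.sum_const, nsmul_eq_mul]
      rfl
    have hlog := logSum (Finset.univ.image A)
      (fun B => ((fib A B).card:ℝ)/(ℓ:ℝ)) (fun _ => (1:ℝ))
      (fun B hB' => le_of_lt (div_pos (hcB' B hB') hL))
      (fun _ _ => zero_le_one)
      (fun _ _ h => absurd h one_ne_zero)
    rw [← Finset.sum_div, hsumc, div_self hL.ne'] at hlog
    simp only [Finset.sum_const, nsmul_eq_mul, mul_one, div_one, one_mul] at hlog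
    have heq : (1/(ℓ:ℝ)) * ∑ j, (Real.log (ℓ:ℝ) - Real.log ((fib A (A j)).card : ℝ))
        = -∑ B ∈ Finset.univ.image A,
            (((fib A B).card:ℝ)/(ℓ:ℝ)) * Real.log (((fib A B).card:ℝ)/(ℓ:ℝ)) := by
      rw [hgroup, Finset.mul_sum, ← Finset.sum_neg_distrib]
      refine Finset.sum_congr rfl fun B hB' => ?_
      rw [Real.log_div (hcB' B hB').ne' hL.ne']
      ring
    have hlogTcard : Real.log (1 / ((Finset.univ.image A).card:ℝ))
        = -Real.log ((Finset.univ.image A).card:ℝ) := by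
      rw [one_div, Real.log_inv]
    rw [hlogTcard] at hlog
    rw [heq]
    linarith
  -- Final combination
  have hsum1 : (1/(ℓ:ℝ)) * ∑ j, KL (QX j) (fun x => (1/(ℓ:ℝ)) * ∑ i, QX i x)
      ≤ (1/(ℓ:ℝ)) * ∑ j, (KL (QY j) (ybr A QY (A j))
        + (Real.log (ℓ:ℝ) - Real.log ((fib A (A j)).card : ℝ))) :=
    mul_le_mul_of_nonneg_left (Finset.sum_le_sum fun j _ => hB j) (by positivity)
  rw [Finset.sum_add_distrib, mul_add] at hsum1
  have hsum2 : (1/(ℓ:ℝ)) * ∑ j, KL (QY j) (ybr A QY (A j))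
      ≤ (1/(ℓ:ℝ)) * ∑ j, KL (QY j) (fun y => (1/(ℓ:ℝ)) * ∑ i, QY i y) :=
    mul_le_mul_of_nonneg_left hC (by positivity)
  linarith

/-- If applying the stochastic matrices A_j increases the mutual information
with the uniform index J by more than log₂ d, then the A_j take more than d
distinct values. -/
theorem more_than_d_matrices_needed
    (ℓ d nX nY : ℕ) (hℓ : 0 < ℓ) (hd : 0 < d)
    (QY : Fin ℓ → Fin nY → ℝ)
    (hQY0 : ∀ j y, 0 ≤ QY j y) (hQY1 : ∀ j, ∑ y, QY j y = 1)
    (QX : Fin ℓ → Fin nX → ℝ)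
    (A : Fin ℓ → Matrix (Fin nX) (Fin nY) ℝ)
    (hA0 : ∀ j x y, 0 ≤ A j x y) (hA1 : ∀ j y, ∑ x, A j x y = 1)
    (hAQ : ∀ j, (A j).mulVec (QY j) = QX j)
    (hgap :
      (entC (fun x => (1 / (ℓ : ℝ)) * ∑ j, QX j x)
          - (1 / (ℓ : ℝ)) * ∑ j, entC (QX j))
        - (entC (fun y => (1 / (ℓ : ℝ)) * ∑ j, QY j y)
            - (1 / (ℓ : ℝ)) * ∑ j, entC (QY j))
        > Real.logb 2 d) :
    d < (Set.range A).ncard := by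
  have hlog2 : (0:ℝ) < Real.log 2 := Real.log_pos one_lt_two
  -- convert hgap to natural-log form
  have hgap' :
      (entR (fun x => (1/(ℓ:ℝ)) * ∑ j, QX j x) - (1/(ℓ:ℝ)) * ∑ j, entR (QX j))
        - (entR (fun y => (1/(ℓ:ℝ)) * ∑ j, QY j y) - (1/(ℓ:ℝ)) * ∑ j, entR (QY j))
        > Real.log d := by
    simp only [entC_eq, Real.logb] at hgap
    rw [← Finset.sum_div, ← Finset.sum_div] at hgap
    have h := mul_lt_mul_of_pos_right hgap hlog2
    rw [div_mul_cancel₀ _ hlog2.ne'] at h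
    calc Real.log d
        < ((entR fun x => 1 / ↑ℓ * ∑ j, QX j x) / Real.log 2
            - 1 / ↑ℓ * ((∑ j, entR (QX j)) / Real.log 2)
            - ((entR fun y => 1 / ↑ℓ * ∑ j, QY j y) / Real.log 2
              - 1 / ↑ℓ * ((∑ j, entR (QY j)) / Real.log 2))) * Real.log 2 := h
      _ = _ := by field_simp
  -- identify the number of distinct matrices
  have hrange : (Set.range A).ncard = (Finset.univ.image A).card := by
    rw [← Set.ncard_coe_finset]
    congr 1
    rw [Finset.coe_image, Finset.coe_univ, Set.image_univ]
  by_contra hcon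
  push_neg at hcon
  have hm : (Finset.univ.image A).card ≤ d := by rw [← hrange]; exact hcon
  have hTne : 0 < (Finset.univ.image A).card :=
    Finset.card_pos.2 ⟨A ⟨0, hℓ⟩, Finset.mem_image_of_mem A (Finset.mem_univ _)⟩
  have hlogle : Real.log ((Finset.univ.image A).card : ℝ) ≤ Real.log (d : ℝ) :=
    Real.log_le_log (Nat.cast_pos.2 hTne) (Nat.cast_le.2 hm)
  have haux := aux ℓ nX nY hℓ QY hQY0 hQY1 QX A hA0 hA1 hAQ
  linarith
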